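/- Let X be a Weibull random variable with shape α > 0 and scale β > 0 and density f(x;α,β). Fix real s and r with r > 0, and set ζ = s + (r-1)(α-1). If ζ > -α, then E[X^s log(X) f^{r-1}(X;α,β)] = (β^{s-r+1} α^{r-1} / r^{1 + ζ/α}) Γ(1 + ζ/α) [ log(β / r^{1/α}) + (1/α) ψ(1 + ζ/α) ], where ψ = Γ'/Γ is the digamma function. In particular, taking r = 1: for s > -α, E[X^s log X] = β^s Γ(1 + s/α) [ log β + (1/α) ψ(1 + s/α) ]. -/

import Mathlib

open Filter Topology Real MeasureTheory

/-- The Weibull probability density function with shape `α` and scale `β`. -/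
noncomputable def weibullPDF (α β x : ℝ) : ℝ :=
  (α / β) * (x / β) ^ (α - 1) * Real.exp (-(x / β) ^ α)

/-- The digamma function `ψ(z) = d/dz log Γ(z) = Γ'(z)/Γ(z)`. -/
noncomputable def digamma (z : ℝ) : ℝ :=
  deriv (fun t => Real.log (Real.Gamma t)) z

section aux

open Set Complex

lemma aux_ofReal_eq {a : ℝ} {t : ℝ} (ht : t ∈ Set.Ioi (0:ℝ)) :
    (t:ℂ) ^ ((a:ℂ) - 1) * (Real.log t * Real.exp (-t)) =
      ((t ^ (a - 1) * Real.log t * Real.exp (-t) : ℝ) : ℂ) := by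
  rw [show ((a:ℂ) - 1) = ((a - 1 : ℝ) : ℂ) by push_cast; ring,
    ← Complex.ofReal_cpow (le_of_lt ht)]
  push_cast
  ring

lemma integrableOn_rpow_mul_log_mul_exp {a : ℝ} (ha : 0 < a) :
    IntegrableOn (fun t : ℝ => t ^ (a - 1) * Real.log t * Real.exp (-t)) (Set.Ioi 0) := by
  have h1 : (0:ℝ) < ((a:ℂ)).re := by simpa using ha
  have key := (mellin_hasDerivAt_of_isBigO_rpow (E := ℂ)
      (f := fun x : ℝ => ((Real.exp (-x) : ℝ) : ℂ)) (s := (a:ℂ)) ?_ ?_ (lt_add_one _) ?_ h1).1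
  · have h2 : IntegrableOn
        (fun t : ℝ => (t:ℂ) ^ ((a:ℂ) - 1) • (Real.log t • ((Real.exp (-t) : ℝ) : ℂ)))
        (Set.Ioi 0) := key
    have h3 : IntegrableOn
        (fun t : ℝ => ((t ^ (a - 1) * Real.log t * Real.exp (-t) : ℝ) : ℂ)) (Set.Ioi 0) := by
      refine h2.congr_fun (fun t ht => ?_) measurableSet_Ioi
      dsimp only
      rw [smul_eq_mul, Complex.real_smul, ← aux_ofReal_eq ht]
      try push_cast
      try ring
    have h4 := h3.re
    refine MeasureTheory.IntegrableOn.congr_fun h4 (fun t _ => ?_) measurableSet_Ioi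
    simp only [RCLike.re_to_complex, Complex.ofReal_re]
  · refine (Continuous.continuousOn ?_).locallyIntegrableOn measurableSet_Ioi
    exact Complex.continuous_ofReal.comp (Real.continuous_exp.comp continuous_neg)
  · rw [← Asymptotics.isBigO_norm_left]
    simp_rw [Complex.norm_real,
      Asymptotics.isBigO_norm_left]
    simpa only [neg_one_mul] using (isLittleO_exp_neg_mul_rpow_atTop zero_lt_one _).isBigO
  · simp_rw [neg_zero, Real.rpow_zero]
    refine Asymptotics.isBigO_const_of_tendsto (?_ : Tendsto _ _ (𝓝 (1 : ℂ))) one_ne_zero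
    rw [(by simp : (1 : ℂ) = ((Real.exp (-0) : ℝ) : ℂ))]
    exact (Complex.continuous_ofReal.comp
      (Real.continuous_exp.comp continuous_neg)).continuousWithinAt

lemma hasDerivAt_realGamma {a : ℝ} (ha : 0 < a) :
    HasDerivAt Real.Gamma
      (∫ t in Set.Ioi (0:ℝ), t ^ (a - 1) * Real.log t * Real.exp (-t)) a := by
  have h1 : (0:ℝ) < ((a:ℂ)).re := by simpa using ha
  have hD := Complex.hasDerivAt_GammaIntegral h1
  have hInt : (∫ t in Set.Ioi (0:ℝ), (t:ℂ) ^ ((a:ℂ) - 1) * (Real.log t * Real.exp (-t)))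
      = ((∫ t in Set.Ioi (0:ℝ), t ^ (a - 1) * Real.log t * Real.exp (-t) : ℝ) : ℂ) := by
    rw [setIntegral_congr_fun measurableSet_Ioi (fun t ht => aux_ofReal_eq ht)]
    have cc : ∀ r : ℝ, Complex.ofReal r = @RCLike.ofReal ℂ _ r := fun r => rfl
    simp_rw [cc]
    rw [_root_.integral_ofReal]
  rw [hInt] at hD
  have hre := hD.real_of_complex
  rw [Complex.ofReal_re] at hre
  refine hre.congr_of_eventuallyEq ?_
  filter_upwards [eventually_gt_nhds ha] with x hx
  rw [← Complex.Gamma_eq_integral (by simpa using hx), Complex.Gamma_ofReal,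
    Complex.ofReal_re]

lemma integral_rpow_mul_log_mul_exp {a : ℝ} (ha : 0 < a) :
    (∫ t in Set.Ioi (0:ℝ), t ^ (a - 1) * Real.log t * Real.exp (-t))
      = Real.Gamma a * _root_.digamma a := by
  have hpos := Real.Gamma_pos_of_pos ha
  have hD := hasDerivAt_realGamma ha
  have hlog := hD.log hpos.ne'
  rw [_root_.digamma, hlog.deriv]
  field_simp

lemma integral_rpow_mul_log_mul_exp_neg_mul_rpow {p q b : ℝ} (hp : 0 < p) (hq : -1 < q)
    (hb : 0 < b) :
    (∫ x in Set.Ioi (0:ℝ), x ^ q * Real.log x * Real.exp (-(b * x ^ p)))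
      = b ^ (-((q + 1) / p)) * (1 / p) * Real.Gamma ((q + 1) / p) *
        (_root_.digamma ((q + 1) / p) / p - Real.log b / p) := by
  have ha : 0 < (q + 1) / p := div_pos (by linarith) hp
  set a := (q + 1) / p with ha_def
  set c := p⁻¹ * Real.log b with hc_def
  set k := b ^ p⁻¹ with hk_def
  have hk : 0 < k := Real.rpow_pos_of_pos hb _
  set g : ℝ → ℝ := fun y => y ^ q * (Real.log y - c) * Real.exp (-y ^ p) with hg_def
  have step1 : (∫ x in Set.Ioi (0:ℝ), x ^ q * Real.log x * Real.exp (-(b * x ^ p)))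
      = ∫ x in Set.Ioi (0:ℝ), b ^ (-(p⁻¹ * q)) * g (k * x) := by
    refine setIntegral_congr_fun measurableSet_Ioi (fun x hx => ?_)
    have hx : (0:ℝ) < x := hx
    have h1 : g (k * x) = k ^ q * x ^ q * (Real.log x) * Real.exp (-(b * x ^ p)) := by
      simp only [hg_def]
      have hlogk : Real.log k = c := by rw [hk_def, Real.log_rpow hb, hc_def]
      have hkp : (k * x) ^ p = b * x ^ p := by
        rw [Real.mul_rpow hk.le hx.le, hk_def, ← Real.rpow_mul hb.le,
          inv_mul_cancel₀ hp.ne', Real.rpow_one]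
      rw [Real.mul_rpow hk.le hx.le, Real.log_mul hk.ne' hx.ne', hlogk, hkp]
      ring
    rw [h1]
    have : b ^ (-(p⁻¹ * q)) * k ^ q = 1 := by
      rw [hk_def, ← Real.rpow_mul hb.le, ← Real.rpow_add hb]
      norm_num
    calc x ^ q * Real.log x * Real.exp (-(b * x ^ p))
        = (b ^ (-(p⁻¹ * q)) * k ^ q) * (x ^ q * Real.log x * Real.exp (-(b * x ^ p))) := by
          rw [this]; ring
      _ = b ^ (-(p⁻¹ * q)) * (k ^ q * x ^ q * Real.log x * Real.exp (-(b * x ^ p))) := by ring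
  have step2 : (∫ x in Set.Ioi (0:ℝ), g (k * x)) = k⁻¹ * ∫ y in Set.Ioi (0:ℝ), g y := by
    have := MeasureTheory.integral_comp_mul_left_Ioi g 0 hk
    rw [mul_zero] at this
    rw [this, smul_eq_mul]
  have step3 : (∫ y in Set.Ioi (0:ℝ), g y)
      = ∫ x in Set.Ioi (0:ℝ), (p⁻¹ * x ^ (p⁻¹ - 1)) • g (x ^ p⁻¹) := by
    rw [MeasureTheory.integral_comp_rpow_Ioi_of_pos (inv_pos.mpr hp)]
  have step4 : (∫ x in Set.Ioi (0:ℝ), (p⁻¹ * x ^ (p⁻¹ - 1)) • g (x ^ p⁻¹))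
      = ∫ x in Set.Ioi (0:ℝ),
          (p⁻¹ * p⁻¹) * (x ^ (a - 1) * Real.log x * Real.exp (-x))
            - (c * p⁻¹) * (Real.exp (-x) * x ^ (a - 1)) := by
    refine setIntegral_congr_fun measurableSet_Ioi (fun x hx => ?_)
    have hx : (0:ℝ) < x := hx
    simp only [hg_def, smul_eq_mul]
    have h1 : (x ^ p⁻¹) ^ q = x ^ (p⁻¹ * q) := by
      rw [← Real.rpow_mul hx.le]
    have h2 : Real.log (x ^ p⁻¹) = p⁻¹ * Real.log x := Real.log_rpow hx _
    have h3 : (x ^ p⁻¹) ^ p = x := by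
      rw [← Real.rpow_mul hx.le, inv_mul_cancel₀ hp.ne', Real.rpow_one]
    rw [h1, h2, h3]
    have h4 : x ^ (p⁻¹ - 1) * x ^ (p⁻¹ * q) = x ^ (a - 1) := by
      rw [← Real.rpow_add hx]
      congr 1
      rw [ha_def]
      field_simp
      ring
    calc p⁻¹ * x ^ (p⁻¹ - 1) * (x ^ (p⁻¹ * q) * (p⁻¹ * Real.log x - c) * Real.exp (-x))
        = (x ^ (p⁻¹ - 1) * x ^ (p⁻¹ * q)) * (p⁻¹ * (p⁻¹ * Real.log x - c) * Real.exp (-x)) := by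
          ring
      _ = _ := by rw [h4]; ring
  have int1 : IntegrableOn (fun x : ℝ => x ^ (a - 1) * Real.log x * Real.exp (-x))
      (Set.Ioi (0:ℝ)) := integrableOn_rpow_mul_log_mul_exp ha
  have int2 : IntegrableOn (fun x : ℝ => Real.exp (-x) * x ^ (a - 1)) (Set.Ioi (0:ℝ)) :=
    Real.GammaIntegral_convergent ha
  have step5 : (∫ x in Set.Ioi (0:ℝ),
          (p⁻¹ * p⁻¹) * (x ^ (a - 1) * Real.log x * Real.exp (-x))
            - (c * p⁻¹) * (Real.exp (-x) * x ^ (a - 1)))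
      = (p⁻¹ * p⁻¹) * (Real.Gamma a * _root_.digamma a) - (c * p⁻¹) * Real.Gamma a := by
    rw [MeasureTheory.integral_sub (int1.const_mul _) (int2.const_mul _),
      MeasureTheory.integral_const_mul, MeasureTheory.integral_const_mul,
      integral_rpow_mul_log_mul_exp ha, ← Real.Gamma_eq_integral ha]
  rw [step1, MeasureTheory.integral_const_mul, step2, step3, step4, step5]
  have hbk : b ^ (-(p⁻¹ * q)) * k⁻¹ = b ^ (-a) := by
    rw [hk_def, ← Real.rpow_neg_one (b ^ p⁻¹), ← Real.rpow_mul hb.le, ← Real.rpow_add hb]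
    congr 1
    rw [ha_def]
    field_simp
    ring
  calc b ^ (-(p⁻¹ * q)) * (k⁻¹ * ((p⁻¹ * p⁻¹) * (Real.Gamma a * _root_.digamma a)
          - (c * p⁻¹) * Real.Gamma a))
      = (b ^ (-(p⁻¹ * q)) * k⁻¹) * ((p⁻¹ * p⁻¹) * (Real.Gamma a * _root_.digamma a)
          - (c * p⁻¹) * Real.Gamma a) := by ring
    _ = b ^ (-a) * (1 / p) * Real.Gamma a * (_root_.digamma a / p - Real.log b / p) := by
        rw [hbk, hc_def]
        field_simp

end aux

lemma weibull_pow_eq {α β r x : ℝ} (hα : 0 < α) (hβ : 0 < β) (hx : 0 < x) :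
    (weibullPDF α β x) ^ r =
      (α ^ r * β ^ (-(α * r))) * (x ^ ((α - 1) * r) * Real.exp (-((r * β ^ (-α)) * x ^ α))) := by
  have hxβ : 0 < x / β := div_pos hx hβ
  rw [weibullPDF]
  rw [Real.mul_rpow (by positivity) (Real.exp_pos _).le,
    Real.mul_rpow (by positivity) (Real.rpow_nonneg hxβ.le _),
    ← Real.rpow_mul hxβ.le]
  have hexp : Real.exp (-(x / β) ^ α) ^ r = Real.exp (-((r * β ^ (-α)) * x ^ α)) := by
    rw [← Real.exp_mul]
    congr 1
    rw [Real.div_rpow hx.le hβ.le, Real.rpow_neg hβ.le]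
    ring
  have hdiv1 : (α / β) ^ r = α ^ r * (β ^ r)⁻¹ := by
    rw [Real.div_rpow hα.le hβ.le]; ring
  have hdiv2 : (x / β) ^ ((α - 1) * r) = x ^ ((α - 1) * r) * (β ^ ((α - 1) * r))⁻¹ := by
    rw [Real.div_rpow hx.le hβ.le]; ring
  rw [hexp, hdiv1, hdiv2]
  have hβc : β ^ (-(α * r)) = (β ^ r)⁻¹ * (β ^ ((α - 1) * r))⁻¹ := by
    rw [← Real.rpow_neg hβ.le, ← Real.rpow_neg hβ.le, ← Real.rpow_add hβ]
    congr 1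
    ring
  rw [hβc]
  ring

lemma weibull_main (α β s r : ℝ) (hα : 0 < α) (hβ : 0 < β) (hr : 0 < r)
    (hζ : s + (r - 1) * (α - 1) > -α) :
    (∫ x in Set.Ioi (0 : ℝ), x ^ s * Real.log x * (weibullPDF α β x) ^ r) =
      β ^ (s - r + 1) * α ^ (r - 1) / r ^ (1 + (s + (r - 1) * (α - 1)) / α) *
        Real.Gamma (1 + (s + (r - 1) * (α - 1)) / α) *
        (Real.log (β / r ^ (1 / α)) +
          (1 / α) * digamma (1 + (s + (r - 1) * (α - 1)) / α)) := by
  set ζ := s + (r - 1) * (α - 1) with hζ_def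
  set q := s + (α - 1) * r with hq_def
  set b := r * β ^ (-α) with hb_def
  have hqζ : q = ζ + α - 1 := by rw [hq_def, hζ_def]; ring
  have hq1 : -1 < q := by rw [hqζ]; linarith
  have hb : 0 < b := by
    rw [hb_def]; exact mul_pos hr (Real.rpow_pos_of_pos hβ _)
  have haeq : (q + 1) / α = 1 + ζ / α := by
    rw [hqζ]
    field_simp
    ring
  set a := 1 + ζ / α with ha_def
  have step1 : (∫ x in Set.Ioi (0 : ℝ), x ^ s * Real.log x * (weibullPDF α β x) ^ r)
      = ∫ x in Set.Ioi (0 : ℝ),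
          (α ^ r * β ^ (-(α * r))) * (x ^ q * Real.log x * Real.exp (-(b * x ^ α))) := by
    refine setIntegral_congr_fun measurableSet_Ioi (fun x hx => ?_)
    have hx : (0:ℝ) < x := hx
    rw [weibull_pow_eq hα hβ hx, hq_def, Real.rpow_add hx]
    ring
  rw [step1, MeasureTheory.integral_const_mul,
    integral_rpow_mul_log_mul_exp_neg_mul_rpow hα hq1 hb, haeq]
  -- now pure rpow algebra
  have hba : b ^ (-a) = r ^ (-a) * β ^ (α * a) := by
    rw [hb_def, Real.mul_rpow hr.le (Real.rpow_nonneg hβ.le _), ← Real.rpow_mul hβ.le]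
    congr 2
    ring
  have hαr : α ^ r = α ^ (r - 1) * α := by
    rw [Real.rpow_sub hα, Real.rpow_one]
    field_simp
  have hβe : β ^ (-(α * r)) * β ^ (α * a) = β ^ (s - r + 1) := by
    rw [← Real.rpow_add hβ]
    congr 1
    rw [ha_def, hζ_def]
    field_simp
    ring
  have hlogb : Real.log b = Real.log r - α * Real.log β := by
    rw [hb_def, Real.log_mul hr.ne' (Real.rpow_pos_of_pos hβ _).ne', Real.log_rpow hβ]
    ring
  have hlogβr : Real.log (β / r ^ (1 / α)) = Real.log β - (1 / α) * Real.log r := by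
    rw [Real.log_div hβ.ne' (Real.rpow_pos_of_pos hr _).ne', Real.log_rpow hr]
  have hra : r ^ (-a) = (r ^ a)⁻¹ := Real.rpow_neg hr.le _
  rw [hba, hlogb, hlogβr, hra, hαr, ← hβe]
  field_simp
  ring

theorem weibullPDF_second_main_tool (α β s r : ℝ) (hα : 0 < α) (hβ : 0 < β) (hr : 0 < r)
    (hζ : s + (r - 1) * (α - 1) > -α) :
    (∫ x in Set.Ioi (0 : ℝ), x ^ s * Real.log x * (weibullPDF α β x) ^ r) =
      β ^ (s - r + 1) * α ^ (r - 1) / r ^ (1 + (s + (r - 1) * (α - 1)) / α) *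
        Real.Gamma (1 + (s + (r - 1) * (α - 1)) / α) *
        (Real.log (β / r ^ (1 / α)) +
          (1 / α) * digamma (1 + (s + (r - 1) * (α - 1)) / α)) ∧
    (∀ s' : ℝ, s' > -α →
      (∫ x in Set.Ioi (0 : ℝ), x ^ s' * Real.log x * weibullPDF α β x) =
        β ^ s' * Real.Gamma (1 + s' / α) *
          (Real.log β + (1 / α) * digamma (1 + s' / α))) := by
  constructor
  · exact weibull_main α β s r hα hβ hr hζ
  · intro s' hs'
    have h := weibull_main α β s' 1 hα hβ one_pos (by simpa using hs')
    simpa [Real.rpow_one, Real.one_rpow, Real.rpow_zero] using h
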